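/- For every integer r ≥ 1 and every x > 0, the derivative of the r-th moment satisfies the differential recurrence (d/dx) μ_r^{(α,β)}(x) = (n r / (n − β)) · μ_{r−1}^{(α+1,β)}(x), where on the right-hand side the (r−1)-th moment is taken with the parameter α replaced by α+1. -/

import Mathlib

open MeasureTheory Real Filter

/-- The Szász–Mirakyan basis functions `ψ_{n,k}(x) = e^{-nx} (nx)^k / k!`. -/
noncomputable def psi (n k : ℕ) (x : ℝ) : ℝ :=
  Real.exp (-(n * x)) * (n * x) ^ k / (Nat.factorial k)

/-- The Szász–Mirakyan–Laguerre–Durrmeyer operator `M_n^{(α,β)}`. -/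
noncomputable def M (α β : ℝ) (n : ℕ) (f : ℝ → ℝ) (x : ℝ) : ℝ :=
  ∑' k : ℕ, (((n : ℝ) - β) ^ ((k : ℝ) + α + 1) / Real.Gamma ((k : ℝ) + α + 1)) *
    (∫ t in Set.Ioi (0 : ℝ), f t * t ^ ((k : ℝ) + α) * Real.exp (-((n : ℝ) - β) * t)) *
    psi n k x

/-- The `r`-th moment `μ_r^{(α,β)}(x) = M_n^{(α,β)}[t ↦ t^r](x)`. -/
noncomputable def mu (α β : ℝ) (n : ℕ) (r : ℕ) (x : ℝ) : ℝ :=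
  M α β n (fun t => t ^ r) x

open Set

private lemma summable_master (p : ℕ) (F R : ℝ) (hF : 1 ≤ F) (hR : 0 ≤ R) :
    Summable (fun k : ℕ => ((k : ℝ) + F) ^ p * R ^ k / (Nat.factorial k : ℝ)) := by
  apply summable_of_ratio_norm_eventually_le (r := 1/2) (by norm_num)
  filter_upwards [Filter.eventually_ge_atTop (Nat.ceil ((2:ℝ)^(p+1) * R))] with k hk
  have hk' : (2:ℝ)^(p+1) * R ≤ (k:ℝ) + 1 := by
    have := Nat.ceil_le.mp (le_refl (Nat.ceil ((2:ℝ)^(p+1) * R)))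
    have h2 : ((Nat.ceil ((2:ℝ)^(p+1) * R) : ℕ) : ℝ) ≤ (k:ℝ) := by exact_mod_cast hk
    linarith
  have hkF : (0:ℝ) < (k:ℝ) + F := by positivity
  have h1 : ((k:ℝ) + 1 + F) ^ p ≤ 2 ^ p * ((k:ℝ) + F) ^ p := by
    rw [← mul_pow]
    apply pow_le_pow_left₀ (by positivity)
    nlinarith [Nat.cast_nonneg (α := ℝ) k]
  rw [Real.norm_eq_abs, Real.norm_eq_abs, abs_of_nonneg (by positivity),
    abs_of_nonneg (by positivity)]
  have hfac : (0:ℝ) < (Nat.factorial k : ℝ) := by positivity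
  calc ((k+1 : ℕ) + F) ^ p * R ^ (k+1) / (Nat.factorial (k+1) : ℝ)
      = (((k:ℝ) + 1 + F) ^ p * (R ^ k * R)) / (((k:ℝ)+1) * (Nat.factorial k : ℝ)) := by
        rw [pow_succ, Nat.factorial_succ]; push_cast; ring
    _ ≤ ((2 ^ p * ((k:ℝ) + F) ^ p) * (R ^ k * R)) / (((k:ℝ)+1) * (Nat.factorial k : ℝ)) := by
        gcongr
    _ = (((k:ℝ) + F) ^ p * R ^ k / (Nat.factorial k : ℝ)) * ((2 ^ p * R) / ((k:ℝ)+1)) := by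
        field_simp
    _ ≤ (((k:ℝ) + F) ^ p * R ^ k / (Nat.factorial k : ℝ)) * (1/2) := by
        apply mul_le_mul_of_nonneg_left _ (by positivity)
        rw [div_le_div_iff₀ (by positivity) (by norm_num)]
        rw [pow_succ] at hk'
        linarith
    _ = 1/2 * (((k:ℝ) + F) ^ p * R ^ k / (Nat.factorial k : ℝ)) := by ring

private lemma Gamma_add_nat (z : ℝ) (hz : 0 < z) (m : ℕ) :
    Real.Gamma (z + m) = Real.Gamma z * ∏ i ∈ Finset.range m, (z + i) := by
  induction m with
  | zero => simp
  | succ m ih =>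
    have h : z + ((m+1 : ℕ) : ℝ) = (z + m) + 1 := by push_cast; ring
    have hzm : z + (m:ℝ) ≠ 0 := by positivity
    rw [h, Real.Gamma_add_one hzm, ih, Finset.prod_range_succ]; ring

private lemma Gamma_ratio_le (z : ℝ) (hz : 0 < z) (m : ℕ) :
    Real.Gamma (z + m) / Real.Gamma z ≤ (z + m) ^ m := by
  rw [Gamma_add_nat z hz m, mul_div_cancel_left₀ _ (Real.Gamma_pos_of_pos hz).ne']
  calc ∏ i ∈ Finset.range m, (z + i) ≤ ∏ _i ∈ Finset.range m, (z + m) := by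
        apply Finset.prod_le_prod
        · intro i _; positivity
        · intro i hi
          have : (i:ℝ) ≤ (m:ℝ) := by exact_mod_cast (Finset.mem_range.mp hi).le
          linarith
    _ = (z + m) ^ m := by rw [Finset.prod_const, Finset.card_range]

private lemma psi_hasDerivAt (n k : ℕ) (y : ℝ) :
    HasDerivAt (fun z => psi n k z)
      ((n:ℝ) * ((k:ℝ) * Real.exp (-((n:ℝ)*y)) * ((n:ℝ)*y)^(k-1) / (Nat.factorial k : ℝ)
        - psi n k y)) y := by
  have h1 : HasDerivAt (fun z : ℝ => Real.exp (-((n:ℝ)*z)))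
      (Real.exp (-((n:ℝ)*y)) * (-(n:ℝ))) y := by
    have h0 : HasDerivAt (fun z : ℝ => -((n:ℝ)*z)) (-(n:ℝ)) y :=
      ((hasDerivAt_id y).const_mul (n:ℝ)).neg.congr_deriv (by simp)
    exact h0.exp
  have h2 : HasDerivAt (fun z : ℝ => ((n:ℝ)*z)^k) ((k:ℝ)*((n:ℝ)*y)^(k-1)*(n:ℝ)) y := by
    have h0 : HasDerivAt (fun z : ℝ => (n:ℝ)*z) (n:ℝ) y :=
      ((hasDerivAt_id y).const_mul (n:ℝ)).congr_deriv (by simp)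
    exact h0.pow k
  have h3 := (h1.mul h2).div_const ((Nat.factorial k : ℝ))
  show HasDerivAt (fun z => Real.exp (-((n:ℝ)*z)) * ((n:ℝ)*z)^k / (Nat.factorial k : ℝ)) _ y
  exact h3.congr_deriv (by unfold psi; ring)


private lemma mu_formula (α β : ℝ) (hα : -1 < α) (n : ℕ) (hn : β < n) (r : ℕ) (y : ℝ) :
    mu α β n r y = ∑' k : ℕ, (((n:ℝ) - β) ^ (-(r:ℝ)) *
      (Real.Gamma ((k:ℝ) + α + (r:ℝ) + 1) / Real.Gamma ((k:ℝ) + α + 1))) * psi n k y := by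
  have hc : (0:ℝ) < (n:ℝ) - β := sub_pos.mpr hn
  unfold mu M
  apply tsum_congr; intro k
  have ha : (0:ℝ) < (k:ℝ) + α + (r:ℝ) + 1 := by
    have h1 : (0:ℝ) ≤ (k:ℝ) := Nat.cast_nonneg k
    have h2 : (0:ℝ) ≤ (r:ℝ) := Nat.cast_nonneg r
    linarith
  have hint : (∫ t in Set.Ioi (0:ℝ), t ^ r * t ^ ((k:ℝ) + α) * Real.exp (-((n:ℝ) - β) * t))
      = (1/((n:ℝ)-β)) ^ ((k:ℝ) + α + (r:ℝ) + 1) * Real.Gamma ((k:ℝ) + α + (r:ℝ) + 1) := by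
    rw [← integral_rpow_mul_exp_neg_mul_Ioi ha hc]
    apply setIntegral_congr_fun measurableSet_Ioi
    intro t ht
    have ht : (0:ℝ) < t := ht
    dsimp only
    rw [show (k:ℝ) + α + (r:ℝ) + 1 - 1 = (r:ℝ) + ((k:ℝ) + α) by ring, neg_mul,
      ← Real.rpow_natCast t r, ← Real.rpow_add ht]
  rw [hint]
  have key : ((n:ℝ)-β) ^ ((k:ℝ) + α + 1) * (((n:ℝ)-β) ^ ((k:ℝ) + α + (r:ℝ) + 1))⁻¹
      = ((n:ℝ)-β) ^ (-(r:ℝ)) := by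
    rw [← Real.rpow_neg hc.le, ← Real.rpow_add hc]
    congr 1; ring
  rw [one_div, Real.inv_rpow hc.le]
  rw [show ((n:ℝ)-β) ^ ((k:ℝ) + α + 1) / Real.Gamma ((k:ℝ) + α + 1) *
      ((((n:ℝ)-β) ^ ((k:ℝ) + α + (r:ℝ) + 1))⁻¹ * Real.Gamma ((k:ℝ) + α + (r:ℝ) + 1)) * psi n k y
    = (((n:ℝ)-β) ^ ((k:ℝ) + α + 1) * (((n:ℝ)-β) ^ ((k:ℝ) + α + (r:ℝ) + 1))⁻¹ *
      (Real.Gamma ((k:ℝ) + α + (r:ℝ) + 1) / Real.Gamma ((k:ℝ) + α + 1))) * psi n k y from by ring,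
    key]



/-- Differential recurrence: `(d/dx) μ_r^{(α,β)}(x) = (n r/(n−β)) μ_{r−1}^{(α+1,β)}(x)`. -/
theorem stmt_5 (α β : ℝ) (hα : -1 < α) (n : ℕ) (hn : β < n) (r : ℕ) (hr : 1 ≤ r)
    (x : ℝ) (hx : 0 < x) :
    HasDerivAt (fun y => mu α β n r y)
      (((n : ℝ) * r / ((n : ℝ) - β)) * mu (α + 1) β n (r - 1) x) x := by
  have hc : (0:ℝ) < (n:ℝ) - β := sub_pos.mpr hn
  set c : ℝ := (n:ℝ) - β with hcdef
  set A : ℕ → ℝ := fun k => Real.Gamma ((k:ℝ) + α + (r:ℝ) + 1) / Real.Gamma ((k:ℝ) + α + 1)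
    with hAdef
  set B : ℕ → ℝ := fun k => Real.Gamma ((k:ℝ) + α + (r:ℝ) + 1) / Real.Gamma ((k:ℝ) + α + 2)
    with hBdef
  set C : ℝ := c ^ (-(r:ℝ)) with hCdef
  set T : ℕ → ℝ → ℝ := fun k y =>
    (k:ℝ) * Real.exp (-((n:ℝ)*y)) * ((n:ℝ)*y)^(k-1) / (Nat.factorial k : ℝ) with hTdef
  have hz1 : ∀ k : ℕ, (0:ℝ) < (k:ℝ) + α + 1 := fun k => by
    have := Nat.cast_nonneg (α := ℝ) k; linarith
  have hz2 : ∀ k : ℕ, (0:ℝ) < (k:ℝ) + α + (r:ℝ) + 1 := fun k => by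
    have h1 := Nat.cast_nonneg (α := ℝ) k; have h2 := Nat.cast_nonneg (α := ℝ) r; linarith
  have hG1 : ∀ k : ℕ, 0 < Real.Gamma ((k:ℝ) + α + 1) := fun k => Real.Gamma_pos_of_pos (hz1 k)
  have hG2 : ∀ k : ℕ, 0 < Real.Gamma ((k:ℝ) + α + (r:ℝ) + 1) :=
    fun k => Real.Gamma_pos_of_pos (hz2 k)
  have hApos : ∀ k, 0 ≤ A k := fun k => (div_pos (hG2 k) (hG1 k)).le
  have hCpos : 0 < C := Real.rpow_pos_of_pos hc _
  set E : ℝ := α + (r:ℝ) + 1 with hEdef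
  have hEpos : (0:ℝ) < E := by
    have := Nat.cast_nonneg (α := ℝ) r; rw [hEdef]; linarith
  set F : ℝ := E + 1 with hFdef
  have hF1 : (1:ℝ) ≤ F := by rw [hFdef]; linarith
  have hA_le : ∀ k : ℕ, A k ≤ ((k:ℝ) + E) ^ r := by
    intro k
    have h := Gamma_ratio_le ((k:ℝ) + α + 1) (hz1 k) r
    rw [show (k:ℝ) + α + 1 + (r:ℝ) = (k:ℝ) + α + (r:ℝ) + 1 by ring] at h
    calc A k ≤ ((k:ℝ) + α + (r:ℝ) + 1) ^ r := h
      _ = ((k:ℝ) + E) ^ r := by rw [hEdef]; ring_nf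
  set R : ℝ := (n:ℝ) * (x + 1) with hRdef
  have hRpos : (0:ℝ) ≤ R := by
    rw [hRdef]; apply mul_nonneg (Nat.cast_nonneg n); linarith
  have hR1 : (1:ℝ) ≤ R + 1 := by linarith
  -- master summable sequence
  have hM : Summable (fun k : ℕ => ((k:ℝ) + F) ^ (r+1) * (R+1) ^ k / (Nat.factorial k : ℝ)) :=
    summable_master (r+1) F (R+1) hF1 (by linarith)
  have hMnonneg : ∀ k : ℕ, (0:ℝ) ≤ ((k:ℝ) + F) ^ (r+1) * (R+1) ^ k / (Nat.factorial k : ℝ) := by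
    intro k
    have h1 : (0:ℝ) ≤ (k:ℝ) + F := by have := Nat.cast_nonneg (α := ℝ) k; linarith
    have h2 : (0:ℝ) ≤ R + 1 := by linarith
    positivity
  -- pointwise bounds for psi and T
  have hpsi_nonneg : ∀ (k : ℕ) (y : ℝ), 0 ≤ y → 0 ≤ psi n k y := by
    intro k y hy
    have hny : (0:ℝ) ≤ (n:ℝ) * y := mul_nonneg (Nat.cast_nonneg n) hy
    unfold psi; positivity
  have hT_nonneg : ∀ (k : ℕ) (y : ℝ), 0 ≤ y → 0 ≤ T k y := by
    intro k y hy
    have hny : (0:ℝ) ≤ (n:ℝ) * y := mul_nonneg (Nat.cast_nonneg n) hy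
    rw [hTdef]
    have h1 : (0:ℝ) ≤ (k:ℝ) := Nat.cast_nonneg k
    positivity
  have hpsi_le : ∀ (k : ℕ) (y : ℝ), 0 ≤ y → y ≤ x + 1 →
      psi n k y ≤ R ^ k / (Nat.factorial k : ℝ) := by
    intro k y hy0 hy1
    have hny0 : (0:ℝ) ≤ (n:ℝ) * y := mul_nonneg (Nat.cast_nonneg n) hy0
    have hnyR : (n:ℝ) * y ≤ R := by
      rw [hRdef]; exact mul_le_mul_of_nonneg_left hy1 (Nat.cast_nonneg n)
    have hexp : Real.exp (-((n:ℝ)*y)) ≤ 1 := Real.exp_le_one_iff.mpr (by linarith)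
    unfold psi
    calc Real.exp (-((n:ℝ)*y)) * ((n:ℝ)*y) ^ k / (Nat.factorial k : ℝ)
        ≤ 1 * R ^ k / (Nat.factorial k : ℝ) :=
          div_le_div_of_nonneg_right
            (mul_le_mul hexp (pow_le_pow_left₀ hny0 hnyR k) (by positivity) one_pos.le)
            (by positivity)
      _ = R ^ k / (Nat.factorial k : ℝ) := by rw [one_mul]
  have hT_le : ∀ (k : ℕ) (y : ℝ), 0 ≤ y → y ≤ x + 1 →
      T k y ≤ (k:ℝ) * R ^ (k-1) / (Nat.factorial k : ℝ) := by
    intro k y hy0 hy1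
    have hny0 : (0:ℝ) ≤ (n:ℝ) * y := mul_nonneg (Nat.cast_nonneg n) hy0
    have hnyR : (n:ℝ) * y ≤ R := by
      rw [hRdef]; exact mul_le_mul_of_nonneg_left hy1 (Nat.cast_nonneg n)
    have hexp : Real.exp (-((n:ℝ)*y)) ≤ 1 := Real.exp_le_one_iff.mpr (by linarith)
    have hk0 : (0:ℝ) ≤ (k:ℝ) := Nat.cast_nonneg k
    rw [hTdef]
    apply div_le_div_of_nonneg_right ?_ (by positivity)
    calc (k:ℝ) * Real.exp (-((n:ℝ)*y)) * ((n:ℝ)*y) ^ (k-1)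
        ≤ (k:ℝ) * 1 * R ^ (k-1) := by
          apply mul_le_mul (mul_le_mul_of_nonneg_left hexp hk0)
            (pow_le_pow_left₀ hny0 hnyR _) (by positivity) (by positivity)
      _ = (k:ℝ) * R ^ (k-1) := by ring
  -- key growth bound
  have hkey : ∀ k : ℕ, A k * ((k:ℝ) * R ^ (k-1) + R ^ k) ≤ ((k:ℝ) + F) ^ (r+1) * (R+1) ^ k := by
    intro k
    have hk0 : (0:ℝ) ≤ (k:ℝ) := Nat.cast_nonneg k
    have hkE : (0:ℝ) ≤ (k:ℝ) + E := by linarith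
    have hkF : (0:ℝ) ≤ (k:ℝ) + F := by linarith
    have e1 : R ^ (k-1) ≤ (R+1) ^ k :=
      (pow_le_pow_left₀ hRpos (by linarith) _).trans (pow_le_pow_right₀ hR1 (Nat.sub_le k 1))
    have e3 : R ^ k ≤ (R+1) ^ k := pow_le_pow_left₀ hRpos (by linarith) k
    have hRk : (0:ℝ) ≤ (R+1) ^ k := pow_nonneg (by linarith) k
    have h1 : (k:ℝ) * R ^ (k-1) + R ^ k ≤ ((k:ℝ)+1) * (R+1) ^ k := by
      have h2 := mul_le_mul_of_nonneg_left e1 hk0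
      nlinarith
    calc A k * ((k:ℝ) * R ^ (k-1) + R ^ k) ≤ ((k:ℝ)+E) ^ r * (((k:ℝ)+1) * (R+1) ^ k) :=
        mul_le_mul (hA_le k) h1
          (add_nonneg (mul_nonneg hk0 (pow_nonneg hRpos _)) (pow_nonneg hRpos _))
          (pow_nonneg hkE r)
      _ = (((k:ℝ)+E) ^ r * ((k:ℝ)+1)) * (R+1) ^ k := by ring
      _ ≤ (((k:ℝ)+F) ^ r * ((k:ℝ)+F)) * (R+1) ^ k := by
          apply mul_le_mul_of_nonneg_right ?_ hRk
          exact mul_le_mul (pow_le_pow_left₀ hkE (by linarith) r) (by linarith)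
            (by linarith) (pow_nonneg hkF r)
      _ = ((k:ℝ)+F) ^ (r+1) * (R+1) ^ k := by rw [pow_succ]
  -- derivative of each term
  have hderiv : ∀ (k : ℕ) (y : ℝ), HasDerivAt (fun z => (C * A k) * psi n k z)
      ((C * A k) * ((n:ℝ) * (T k y - psi n k y))) y := by
    intro k y
    exact (psi_hasDerivAt n k y).const_mul (C * A k)
  -- bound on derivatives
  have hbound : ∀ (k : ℕ) (y : ℝ), y ∈ Set.Ioo (0:ℝ) (x+1) →
      ‖(C * A k) * ((n:ℝ) * (T k y - psi n k y))‖
        ≤ (C * (n:ℝ)) * (((k:ℝ)+F) ^ (r+1) * (R+1) ^ k / (Nat.factorial k : ℝ)) := by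
    intro k y hy
    obtain ⟨hy0, hy1⟩ := hy
    have hfac : (0:ℝ) < (Nat.factorial k : ℝ) := by positivity
    rw [Real.norm_eq_abs, abs_mul, abs_mul, abs_mul, abs_of_nonneg hCpos.le,
      abs_of_nonneg (hApos k), abs_of_nonneg (Nat.cast_nonneg (α := ℝ) n)]
    calc C * A k * ((n:ℝ) * |T k y - psi n k y|)
        ≤ (C * A k) * ((n:ℝ) * ((k:ℝ) * R ^ (k-1) / (Nat.factorial k : ℝ)
            + R ^ k / (Nat.factorial k : ℝ))) := by
          apply mul_le_mul_of_nonneg_left ?_ (mul_nonneg hCpos.le (hApos k))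
          apply mul_le_mul_of_nonneg_left ?_ (Nat.cast_nonneg (α := ℝ) n)
          calc |T k y - psi n k y| ≤ |T k y| + |psi n k y| := abs_sub _ _
            _ ≤ _ := add_le_add
              (by rw [abs_of_nonneg (hT_nonneg k y hy0.le)]; exact hT_le k y hy0.le hy1.le)
              (by rw [abs_of_nonneg (hpsi_nonneg k y hy0.le)]; exact hpsi_le k y hy0.le hy1.le)
      _ = (C * (n:ℝ)) * ((A k * ((k:ℝ) * R ^ (k-1) + R ^ k)) / (Nat.factorial k : ℝ)) := by
          ring
      _ ≤ (C * (n:ℝ)) * (((k:ℝ)+F) ^ (r+1) * (R+1) ^ k / (Nat.factorial k : ℝ)) := by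
          apply mul_le_mul_of_nonneg_left
            (div_le_div_of_nonneg_right (hkey k) hfac.le)
            (mul_nonneg hCpos.le (Nat.cast_nonneg n))
  -- summability facts
  have hu : Summable (fun k : ℕ =>
      (C * (n:ℝ)) * (((k:ℝ)+F) ^ (r+1) * (R+1) ^ k / (Nat.factorial k : ℝ))) :=
    hM.mul_left _
  have hA_le' : ∀ k : ℕ, A k ≤ ((k:ℝ)+F) ^ (r+1) := by
    intro k
    have hk0 : (0:ℝ) ≤ (k:ℝ) := Nat.cast_nonneg k
    have hkE : (0:ℝ) ≤ (k:ℝ) + E := by linarith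
    calc A k ≤ ((k:ℝ)+E) ^ r := hA_le k
      _ ≤ ((k:ℝ)+F) ^ r := pow_le_pow_left₀ hkE (by linarith) r
      _ ≤ ((k:ℝ)+F) ^ (r+1) := pow_le_pow_right₀ (by linarith) (Nat.le_succ r)
  have hS2 : Summable (fun k : ℕ => A k * psi n k x) := by
    apply Summable.of_nonneg_of_le
      (fun k => mul_nonneg (hApos k) (hpsi_nonneg k x hx.le)) ?_ hM
    intro k
    have hfac : (0:ℝ) < (Nat.factorial k : ℝ) := by positivity
    have hk0 : (0:ℝ) ≤ (k:ℝ) := Nat.cast_nonneg k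
    calc A k * psi n k x ≤ A k * (R ^ k / (Nat.factorial k : ℝ)) :=
        mul_le_mul_of_nonneg_left (hpsi_le k x hx.le (by linarith)) (hApos k)
      _ ≤ (A k * ((k:ℝ) * R ^ (k-1) + R ^ k)) / (Nat.factorial k : ℝ) := by
          rw [mul_div_assoc']
          apply div_le_div_of_nonneg_right ?_ hfac.le
          apply mul_le_mul_of_nonneg_left ?_ (hApos k)
          have : (0:ℝ) ≤ (k:ℝ) * R ^ (k-1) := mul_nonneg hk0 (pow_nonneg hRpos _)
          linarith
      _ ≤ ((k:ℝ)+F) ^ (r+1) * (R+1) ^ k / (Nat.factorial k : ℝ) :=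
          div_le_div_of_nonneg_right (hkey k) hfac.le
  have hS1 : Summable (fun k : ℕ => A k * T k x) := by
    apply Summable.of_nonneg_of_le
      (fun k => mul_nonneg (hApos k) (hT_nonneg k x hx.le)) ?_ hM
    intro k
    have hfac : (0:ℝ) < (Nat.factorial k : ℝ) := by positivity
    calc A k * T k x ≤ A k * ((k:ℝ) * R ^ (k-1) / (Nat.factorial k : ℝ)) :=
        mul_le_mul_of_nonneg_left (hT_le k x hx.le (by linarith)) (hApos k)
      _ ≤ (A k * ((k:ℝ) * R ^ (k-1) + R ^ k)) / (Nat.factorial k : ℝ) := by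
          rw [mul_div_assoc']
          apply div_le_div_of_nonneg_right ?_ hfac.le
          apply mul_le_mul_of_nonneg_left ?_ (hApos k)
          have : (0:ℝ) ≤ R ^ k := pow_nonneg hRpos _
          linarith
      _ ≤ ((k:ℝ)+F) ^ (r+1) * (R+1) ^ k / (Nat.factorial k : ℝ) :=
          div_le_div_of_nonneg_right (hkey k) hfac.le
  have hg0 : Summable (fun k : ℕ => (C * A k) * psi n k x) := by
    simpa [mul_assoc] using hS2.mul_left C
  -- the function equals the series
  have hEQ : (fun y => mu α β n r y) = (fun z : ℝ => ∑' k : ℕ, (C * A k) * psi n k z) := by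
    funext y
    rw [mu_formula α β hα n hn r y]
  -- main derivative statement
  have hxmem : x ∈ Set.Ioo (0:ℝ) (x+1) := ⟨hx, by linarith⟩
  have Hmain : HasDerivAt (fun z : ℝ => ∑' k : ℕ, (C * A k) * psi n k z)
      (∑' k : ℕ, (C * A k) * ((n:ℝ) * (T k x - psi n k x))) x :=
    hasDerivAt_tsum_of_isPreconnected hu isOpen_Ioo (convex_Ioo (0:ℝ) (x+1)).isPreconnected
      (fun k y _ => hderiv k y) hbound hxmem hg0 hxmem
  -- shift identity
  have hTpsi : ∀ k : ℕ, T (k+1) x = psi n k x := by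
    intro k
    rw [hTdef]
    simp only [Nat.add_sub_cancel, Nat.factorial_succ]
    unfold psi
    have hk1 : ((k:ℝ)+1) ≠ 0 := by positivity
    push_cast
    field_simp
  have hS1' : Summable (fun k : ℕ => A (k+1) * psi n k x) := by
    have h := (summable_nat_add_iff 1).mpr hS1
    exact h.congr fun k => by rw [hTpsi k]
  have hAB : ∀ k : ℕ, A (k+1) - A k = (r:ℝ) * B k := by
    intro k
    have h1 : Real.Gamma (((k+1:ℕ):ℝ) + α + (r:ℝ) + 1)
        = ((k:ℝ)+α+(r:ℝ)+1) * Real.Gamma ((k:ℝ)+α+(r:ℝ)+1) := by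
      rw [show ((k+1:ℕ):ℝ) + α + (r:ℝ) + 1 = ((k:ℝ)+α+(r:ℝ)+1) + 1 by push_cast; ring,
        Real.Gamma_add_one (hz2 k).ne']
    have h2 : Real.Gamma (((k+1:ℕ):ℝ) + α + 1) = ((k:ℝ)+α+1) * Real.Gamma ((k:ℝ)+α+1) := by
      rw [show ((k+1:ℕ):ℝ) + α + 1 = ((k:ℝ)+α+1) + 1 by push_cast; ring,
        Real.Gamma_add_one (hz1 k).ne']
    have h3 : Real.Gamma ((k:ℝ) + α + 2) = ((k:ℝ)+α+1) * Real.Gamma ((k:ℝ)+α+1) := by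
      rw [show (k:ℝ) + α + 2 = ((k:ℝ)+α+1) + 1 by ring, Real.Gamma_add_one (hz1 k).ne']
    rw [hAdef, hBdef]
    dsimp only
    rw [h1, h2, h3]
    have e1 := (hz1 k).ne'
    have e2 := (hG1 k).ne'
    field_simp
    ring
  -- value of the derivative series
  have hsum_eq : (∑' k : ℕ, (C * A k) * ((n:ℝ) * (T k x - psi n k x)))
      = ((n:ℝ) * C) * ((r:ℝ) * ∑' k : ℕ, B k * psi n k x) := by
    have e0 : ∀ k : ℕ, (C * A k) * ((n:ℝ) * (T k x - psi n k x))
        = ((n:ℝ) * C) * (A k * T k x) - ((n:ℝ) * C) * (A k * psi n k x) := fun k => by ring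
    rw [tsum_congr e0, Summable.tsum_sub (hS1.mul_left _) (hS2.mul_left _), tsum_mul_left, tsum_mul_left]
    have e1 : (∑' k : ℕ, A k * T k x) = ∑' k : ℕ, A (k+1) * psi n k x := by
      rw [Summable.tsum_eq_zero_add hS1]
      have h0 : A 0 * T 0 x = 0 := by rw [hTdef]; simp
      rw [h0, zero_add]
      exact tsum_congr fun k => by rw [hTpsi k]
    rw [e1, ← mul_sub, ← Summable.tsum_sub hS1' hS2]
    have e2 : ∀ k : ℕ, A (k+1) * psi n k x - A k * psi n k x = (r:ℝ) * (B k * psi n k x) := by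
      intro k; rw [← sub_mul, hAB k]; ring
    rw [tsum_congr e2, tsum_mul_left]
  -- value of the right-hand side
  have hmuR : mu (α+1) β n (r-1) x = c ^ (1 - (r:ℝ)) * ∑' k : ℕ, B k * psi n k x := by
    rw [mu_formula (α+1) β (by linarith) n hn (r-1) x]
    have hcast : ((r - 1 : ℕ) : ℝ) = (r:ℝ) - 1 := by
      push_cast [Nat.cast_sub hr]
      ring
    have e3 : ∀ k : ℕ, (((n:ℝ) - β) ^ (-(((r-1:ℕ)):ℝ)) *
        (Real.Gamma ((k:ℝ)+(α+1)+((r-1:ℕ):ℝ)+1) / Real.Gamma ((k:ℝ)+(α+1)+1))) * psi n k x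
        = c ^ (1-(r:ℝ)) * (B k * psi n k x) := by
      intro k
      rw [hcast, show (k:ℝ)+(α+1)+((r:ℝ)-1)+1 = (k:ℝ)+α+(r:ℝ)+1 by ring,
        show (k:ℝ)+(α+1)+1 = (k:ℝ)+α+2 by ring, show -((r:ℝ)-1) = 1-(r:ℝ) by ring,
        hBdef, hcdef]
      ring
    rw [tsum_congr e3, tsum_mul_left]
  rw [hEQ]
  have hfinal : ((n:ℝ) * (r:ℝ) / c) * mu (α+1) β n (r-1) x
      = ∑' k : ℕ, (C * A k) * ((n:ℝ) * (T k x - psi n k x)) := by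
    rw [hmuR, hsum_eq]
    have hcr : c ^ (1 - (r:ℝ)) = c * C := by
      rw [hCdef, show (1:ℝ) - (r:ℝ) = 1 + (-(r:ℝ)) by ring, Real.rpow_add hc, Real.rpow_one]
    rw [hcr]
    field_simp
  rw [hfinal]
  exact Hmain
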